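/- For every n ≥ 1, the digraph D_n admits a valid DAG-depth decomposition (P, org) of depth n (hence optimal, since ddp(D_n) = n) such that |V(P)| = 2^{n+1} − 2; in particular, there is a digraph on 2n vertices having a valid optimal DAG-depth decomposition of exponential size. -/

import Mathlib

open scoped Classical

noncomputable section

/-- A finite directed graph: a finite vertex set together with an adjacency
relation whose edges join vertices of the graph. -/
structure FinDigraph (α : Type) where
  verts : Finset α
  Adj : α → α → Prop
  adj_mem : ∀ u v, Adj u v → u ∈ verts ∧ v ∈ verts

namespace FinDigraph

variable {α β : Type}

/-- The out-neighbourhood `N⁺_D(v)`. -/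
def outNbhd (D : FinDigraph α) (v : α) : Set α := {u | D.Adj v u}

/-- The set of vertices reachable from `s` by a (possibly trivial) directed path. -/
def reachSet (D : FinDigraph α) (s : α) : Finset α :=
  D.verts.filter fun v => Relation.ReflTransGen D.Adj s v

/-- A reachable fragment: an inclusion-maximal set among the reachable sets. -/
def IsFragment (D : FinDigraph α) (R : Finset α) : Prop :=
  (∃ s ∈ D.verts, R = D.reachSet s) ∧
  ∀ s ∈ D.verts, R ⊆ D.reachSet s → R = D.reachSet s

/-- The collection of all reachable fragments of `D`. -/
def fragments (D : FinDigraph α) : Finset (Finset α) :=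
  D.verts.powerset.filter fun R => D.IsFragment R

/-- The induced subdigraph `D[S]`. -/
def induce (D : FinDigraph α) (S : Finset α) : FinDigraph α where
  verts := D.verts ∩ S
  Adj u v := D.Adj u v ∧ u ∈ S ∧ v ∈ S
  adj_mem := fun u v h => ⟨Finset.mem_inter.mpr ⟨(D.adj_mem u v h.1).1, h.2.1⟩,
    Finset.mem_inter.mpr ⟨(D.adj_mem u v h.1).2, h.2.2⟩⟩

/-- Deletion of a vertex: `D − v = D[V(D) ∖ {v}]`. -/
def deleteVert (D : FinDigraph α) (v : α) : FinDigraph α :=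
  D.induce (D.verts.erase v)

/-- Fuel-based helper for DAG-depth; the fuel `|V(D)|` always suffices since each
recursive call strictly decreases the number of vertices. -/
def ddpAux : ℕ → FinDigraph α → ℕ
  | 0, _ => 0
  | n+1, D =>
    if hcard : D.verts.card ≤ 1 then 1
    else if D.fragments.card = 1 then
      1 + D.verts.inf' (Finset.card_pos.mp (by omega)) fun v => ddpAux n (D.deleteVert v)
    else
      D.fragments.sup fun R => ddpAux n (D.induce R)

/-- The DAG-depth of a digraph. -/
def ddp (D : FinDigraph α) : ℕ := ddpAux D.verts.card D

/-- A DAG: a (finite) digraph with no directed cycles. -/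
def IsDag (P : FinDigraph α) : Prop := ∀ v, ¬ Relation.TransGen P.Adj v v

/-- A root of a DAG: a vertex of indegree zero. -/
def IsRoot (P : FinDigraph α) (r : α) : Prop := r ∈ P.verts ∧ ∀ u, ¬ P.Adj u r

/-- `y` is a descendant of `x`: there is a (possibly trivial) directed path from `x` to `y`. -/
def Desc (P : FinDigraph α) (x y : α) : Prop := Relation.ReflTransGen P.Adj x y

/-- `l` is a directed path in `P` starting at a root of `P` and ending at `v`. -/
def IsRootPath (P : FinDigraph α) (l : List α) (v : α) : Prop :=
  l ≠ [] ∧ l.Chain' P.Adj ∧ (∀ x ∈ l, x ∈ P.verts) ∧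
  (∃ r, l.head? = some r ∧ P.IsRoot r) ∧ l.getLast? = some v

/-- The depth of a DAG: the maximum number of vertices on a directed path. -/
def depth (P : FinDigraph α) : ℕ :=
  sSup {n : ℕ | ∃ l : List α, l.Chain' P.Adj ∧ (∀ x ∈ l, x ∈ P.verts) ∧ l.length = n}

/-- The Neighbor cover condition for a DAG-depth decomposition `(P, org)` of `D`. -/
def NeighborCover (D : FinDigraph α) (P : FinDigraph β) (org : β → α) : Prop :=
  ∀ v' ∈ P.verts, ∀ u, D.Adj (org v') u →
    (∃ u' ∈ P.verts, org u' = u ∧ P.Desc v' u') ∨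
    (∀ l, P.IsRootPath l v' → ∃ u' ∈ l, org u' = u)

/-- `(P, org)` is a valid DAG-depth decomposition of `D`: `P` is a DAG, `org` maps
`V(P)` onto `V(D)`, and the Neighbor cover condition holds. -/
def IsValidDecomp (D : FinDigraph α) (P : FinDigraph β) (org : β → α) : Prop :=
  P.IsDag ∧ (∀ v' ∈ P.verts, org v' ∈ D.verts) ∧
  (∀ v ∈ D.verts, ∃ v' ∈ P.verts, org v' = v) ∧
  NeighborCover D P org

end FinDigraph

namespace FinDigraph

/-- The digraph `Dn n` with vertices `a_1, …, a_n, b_1, …, b_n`, where `a_i = (i, false)`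
and `b_i = (i, true)`, and edges `(x_i, y_j)` for all `1 ≤ i < j ≤ n` and all choices
`x, y ∈ {a, b}`. -/
def Dn (n : ℕ) : FinDigraph (ℕ × Bool) where
  verts := Finset.Icc 1 n ×ˢ Finset.univ
  Adj u v := 1 ≤ u.1 ∧ u.1 < v.1 ∧ v.1 ≤ n
  adj_mem := by
    intro u v h
    simp only [Finset.mem_product, Finset.mem_Icc, Finset.mem_univ, and_true]
    omega

end FinDigraph


namespace FinDigraph

open Finset

lemma ext' {α : Type} {D E : FinDigraph α} (h1 : D.verts = E.verts)
    (h2 : ∀ u v, D.Adj u v ↔ E.Adj u v) : D = E := by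
  obtain ⟨v1, a1, m1⟩ := D
  obtain ⟨v2, a2, m2⟩ := E
  simp only at h1 h2 ⊢
  subst h1
  have : a1 = a2 := by funext u v; exact propext (h2 u v)
  subst this
  rfl

lemma induce_verts {α : Type} (D : FinDigraph α) (S : Finset α) :
    (D.induce S).verts = D.verts ∩ S := rfl

lemma induce_adj {α : Type} (D : FinDigraph α) (S : Finset α) (u v : α) :
    (D.induce S).Adj u v ↔ D.Adj u v ∧ u ∈ S ∧ v ∈ S := Iff.rfl

section DdpDn

variable {n : ℕ}

/-- Induced subgraph of `Dn n` on a vertex set `S`. -/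
abbrev GS (n : ℕ) (S : Finset (ℕ × Bool)) : FinDigraph (ℕ × Bool) := (Dn n).induce S

lemma dn_verts_mem {v : ℕ × Bool} : v ∈ (Dn n).verts ↔ 1 ≤ v.1 ∧ v.1 ≤ n := by
  simp [Dn, Finset.mem_product, Finset.mem_Icc]

variable {S : Finset (ℕ × Bool)}

lemma GS_verts (hS : S ⊆ (Dn n).verts) : (GS n S).verts = S := by
  rw [induce_verts]
  ext x
  simp only [Finset.mem_inter, and_iff_right_iff_imp]
  exact fun hx => hS hx

lemma GS_adj (hS : S ⊆ (Dn n).verts) {u v : ℕ × Bool} :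
    (GS n S).Adj u v ↔ u ∈ S ∧ v ∈ S ∧ u.1 < v.1 := by
  rw [induce_adj]
  constructor
  · rintro ⟨h, hu, hv⟩; exact ⟨hu, hv, h.2.1⟩
  · rintro ⟨hu, hv, h⟩
    have h1 := dn_verts_mem.mp (hS hu); have h2 := dn_verts_mem.mp (hS hv)
    exact ⟨⟨h1.1, h, h2.2⟩, hu, hv⟩

lemma GS_induce (hS : S ⊆ (Dn n).verts) (T : Finset (ℕ × Bool)) (hT : T ⊆ S) :
    (GS n S).induce T = GS n T := by
  apply ext'
  · rw [induce_verts, induce_verts, induce_verts]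
    ext x
    simp only [Finset.mem_inter]
    constructor
    · tauto
    · intro ⟨h1, h2⟩; exact ⟨⟨h1, hT h2⟩, h2⟩
  · intro u v
    rw [induce_adj, induce_adj, induce_adj]
    constructor
    · tauto
    · rintro ⟨h, hu, hv⟩; exact ⟨⟨h, hT hu, hT hv⟩, hu, hv⟩

lemma GS_delete (hS : S ⊆ (Dn n).verts) (v : ℕ × Bool) :
    (GS n S).deleteVert v = GS n (S.erase v) := by
  unfold deleteVert
  refine (GS_induce hS _ (fun x hx => by
    simp only [Finset.mem_erase, GS_verts hS] at hx; exact hx.2)).trans ?_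
  congr 1
  ext x
  simp only [Finset.mem_erase, GS_verts hS]

lemma GS_reach (hS : S ⊆ (Dn n).verts) {s v : ℕ × Bool}
    (h : Relation.ReflTransGen (GS n S).Adj s v) :
    v = s ∨ (GS n S).Adj s v := by
  induction h with
  | refl => left; rfl
  | tail h1 h2 ih =>
    right
    rcases ih with rfl | h3
    · exact h2
    · rw [GS_adj hS] at h3 h2 ⊢
      exact ⟨h3.1, h2.2.1, h3.2.2.trans h2.2.2⟩

lemma GS_reachSet (hS : S ⊆ (Dn n).verts) {s : ℕ × Bool} (hs : s ∈ S) :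
    (GS n S).reachSet s = S.filter (fun v => v = s ∨ s.1 < v.1) := by
  unfold reachSet
  ext v
  simp only [Finset.mem_filter, GS_verts hS]
  constructor
  · rintro ⟨hv, h⟩
    refine ⟨hv, ?_⟩
    rcases GS_reach hS h with rfl | h3
    · exact Or.inl rfl
    · exact Or.inr ((GS_adj hS).mp h3).2.2
  · rintro ⟨hv, rfl | h⟩
    · exact ⟨hv, Relation.ReflTransGen.refl⟩
    · exact ⟨hv, Relation.ReflTransGen.single ((GS_adj hS).mpr ⟨hs, hv, h⟩)⟩

lemma GS_reachSet_subset (hS : S ⊆ (Dn n).verts) (s : ℕ × Bool) :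
    (GS n S).reachSet s ⊆ S := by
  intro v hv
  have := Finset.mem_filter.mp hv
  rw [GS_verts hS] at this
  exact this.1

end DdpDn

end FinDigraph

namespace FinDigraph

open Finset

section Frag

variable {n : ℕ} {S : Finset (ℕ × Bool)}

lemma GS_fragments_lone (hS : S ⊆ (Dn n).verts) {s₀ : ℕ × Bool} (hs₀ : s₀ ∈ S)
    (hmin : ∀ t ∈ S, s₀.1 ≤ t.1) (hlone : (s₀.1, !s₀.2) ∉ S) :
    (GS n S).fragments = {S} := by
  have hs₀v : s₀ ∈ (GS n S).verts := by rw [GS_verts hS]; exact hs₀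
  have hreach : (GS n S).reachSet s₀ = S := by
    rw [GS_reachSet hS hs₀]
    ext v
    simp only [Finset.mem_filter, and_iff_left_iff_imp]
    intro hv
    rcases lt_or_eq_of_le (hmin v hv) with h | h
    · exact Or.inr h
    · left
      obtain ⟨i, c⟩ := v
      obtain ⟨j, d⟩ := s₀
      simp only at h
      subst h
      cases c <;> cases d <;> simp_all
  ext R
  simp only [fragments, Finset.mem_filter, Finset.mem_powerset, Finset.mem_singleton]
  constructor
  · rintro ⟨hRsub, ⟨s, hs, rfl⟩, hmax⟩
    have hsub : (GS n S).reachSet s ⊆ (GS n S).reachSet s₀ := by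
      rw [hreach]; exact GS_reachSet_subset hS s
    rw [hmax s₀ hs₀v hsub, hreach]
  · rintro rfl
    refine ⟨subset_of_eq (GS_verts hS).symm, ⟨s₀, hs₀v, hreach.symm⟩, ?_⟩
    intro s' _ hsub
    exact (Finset.Subset.antisymm hsub (GS_reachSet_subset hS s'))

lemma GS_fragments_full (hS : S ⊆ (Dn n).verts) {i₀ : ℕ}
    (hb : ∀ b, (i₀, b) ∈ S) (hmin : ∀ t ∈ S, i₀ ≤ t.1) :
    (GS n S).fragments = {S.filter (fun v => v = (i₀, false) ∨ i₀ < v.1),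
                          S.filter (fun v => v = (i₀, true) ∨ i₀ < v.1)} := by
  have hR : ∀ b, (GS n S).reachSet (i₀, b) = S.filter (fun v => v = (i₀, b) ∨ i₀ < v.1) :=
    fun b => GS_reachSet hS (hb b)
  have hmemv : ∀ b, (i₀, b) ∈ (GS n S).verts := by
    intro b; rw [GS_verts hS]; exact hb b
  have hkey : ∀ (b : Bool) (s' : ℕ × Bool), s' ∈ S →
      (i₀, b) ∈ (GS n S).reachSet s' → s' = (i₀, b) := by
    intro b s' hs' hmem
    rw [GS_reachSet hS hs', Finset.mem_filter] at hmem
    rcases hmem.2 with h | h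
    · exact h.symm
    · exact absurd (hmin s' hs') (by omega)
  have hfrag : ∀ b, (GS n S).IsFragment (S.filter (fun v => v = (i₀, b) ∨ i₀ < v.1)) := by
    intro b
    refine ⟨⟨(i₀, b), hmemv b, (hR b).symm⟩, ?_⟩
    intro s' hs' hsub
    rw [GS_verts hS] at hs'
    have h1 : (i₀, b) ∈ S.filter (fun v => v = (i₀, b) ∨ i₀ < v.1) :=
      Finset.mem_filter.mpr ⟨hb b, Or.inl rfl⟩
    have h2 := hkey b s' hs' (hsub h1)
    subst h2
    exact (hR b).symm
  ext R
  simp only [fragments, Finset.mem_filter, Finset.mem_powerset, Finset.mem_insert,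
    Finset.mem_singleton]
  constructor
  · rintro ⟨hRsub, ⟨s, hs, rfl⟩, hmax⟩
    rw [GS_verts hS] at hs
    rcases lt_or_eq_of_le (hmin s hs) with h | h
    · left
      have hsub : (GS n S).reachSet s ⊆ S.filter (fun v => v = (i₀, false) ∨ i₀ < v.1) := by
        intro v hv
        rw [GS_reachSet hS hs, Finset.mem_filter] at hv
        refine Finset.mem_filter.mpr ⟨hv.1, Or.inr ?_⟩
        rcases hv.2 with rfl | hlt
        · exact h
        · omega
      rw [← hR false] at hsub
      rw [hmax (i₀, false) (hmemv false) hsub, hR false]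
    · obtain ⟨j, c⟩ := s
      simp only at h
      subst h
      cases c
      · left; exact hR false
      · right; exact hR true
  · rintro (rfl | rfl)
    · exact ⟨(Finset.filter_subset _ _).trans (subset_of_eq (GS_verts hS).symm), hfrag false⟩
    · exact ⟨(Finset.filter_subset _ _).trans (subset_of_eq (GS_verts hS).symm), hfrag true⟩

end Frag

end FinDigraph

namespace FinDigraph

open Finset

/-- Levels at which both vertices are present. -/
def fullL (S : Finset (ℕ × Bool)) : Finset ℕ :=
  (S.image Prod.fst).filter fun i => (i, false) ∈ S ∧ (i, true) ∈ S

lemma mem_fullL {S : Finset (ℕ × Bool)} {i : ℕ} :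
    i ∈ fullL S ↔ (i, false) ∈ S ∧ (i, true) ∈ S := by
  simp only [fullL, Finset.mem_filter, Finset.mem_image, and_iff_right_iff_imp]
  exact fun h => ⟨(i, false), h.1, rfl⟩

lemma fullL_mono {S T : Finset (ℕ × Bool)} (h : S ⊆ T) : fullL S ⊆ fullL T := by
  intro i hi
  rw [mem_fullL] at hi ⊢
  exact ⟨h hi.1, h hi.2⟩

/-- Number of full levels. -/
def mL (S : Finset (ℕ × Bool)) : ℕ := (fullL S).card

/-- There is a vertex without partner lying below all full levels. -/
def lonelyLow (S : Finset (ℕ × Bool)) : Prop :=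
  ∃ v ∈ S, (v.1, !v.2) ∉ S ∧ ∀ i ∈ fullL S, v.1 < i

/-- Lower-bound potential. -/
def gL (S : Finset (ℕ × Bool)) : ℕ := mL S + (if lonelyLow S then 1 else 0)

/-- Number of occupied levels. -/
def hL (S : Finset (ℕ × Bool)) : ℕ := (S.image Prod.fst).card

lemma hL_mono {S T : Finset (ℕ × Bool)} (h : S ⊆ T) : hL S ≤ hL T :=
  Finset.card_le_card (Finset.image_subset_image h)

lemma mL_erase (S : Finset (ℕ × Bool)) (v : ℕ × Bool) : mL S ≤ mL (S.erase v) + 1 := by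
  have hsub : fullL S ⊆ insert v.1 (fullL (S.erase v)) := by
    intro i hi
    rw [mem_fullL] at hi
    rcases eq_or_ne i v.1 with rfl | hne
    · exact Finset.mem_insert_self _ _
    · refine Finset.mem_insert_of_mem (mem_fullL.mpr ⟨?_, ?_⟩) <;>
        [skip; skip] <;>
        · refine Finset.mem_erase.mpr ⟨?_, by tauto⟩
          intro hcontra
          apply hne
          rw [← hcontra]
  calc mL S ≤ (insert v.1 (fullL (S.erase v))).card := Finset.card_le_card hsub
    _ ≤ mL (S.erase v) + 1 := Finset.card_insert_le _ _

lemma gL_erase (S : Finset (ℕ × Bool)) (v : ℕ × Bool) : gL S ≤ gL (S.erase v) + 1 := by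
  have h1 := mL_erase S v
  by_cases hm : mL S ≤ mL (S.erase v)
  · have h3 : gL S ≤ mL S + 1 := by unfold gL; split_ifs <;> omega
    have h2 : mL (S.erase v) ≤ gL (S.erase v) := by unfold gL; split_ifs <;> omega
    omega
  · by_cases hl : lonelyLow S
    · have hfull : v.1 ∈ fullL S := by
        by_contra hc
        apply hm
        apply Finset.card_le_card
        intro i hi
        have hi' := mem_fullL.mp hi
        have hne : i ≠ v.1 := by rintro rfl; exact hc hi
        rw [mem_fullL]
        refine ⟨Finset.mem_erase.mpr ⟨?_, hi'.1⟩, Finset.mem_erase.mpr ⟨?_, hi'.2⟩⟩ <;>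
          · intro hcontra; exact hne (by rw [← hcontra])
      obtain ⟨w, hw, hwp, hwlow⟩ := id hl
      have hwv : w.1 < v.1 := hwlow v.1 hfull
      have hlon' : lonelyLow (S.erase v) := by
        refine ⟨w, Finset.mem_erase.mpr ⟨fun h => by subst h; omega, hw⟩, ?_, ?_⟩
        · intro hc; exact hwp (Finset.mem_of_mem_erase hc)
        · intro i hi
          exact hwlow i (fullL_mono (Finset.erase_subset _ _) hi)
      have e1 : gL S = mL S + 1 := by unfold gL; rw [if_pos hl]
      have e2 : gL (S.erase v) = mL (S.erase v) + 1 := by unfold gL; rw [if_pos hlon']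
      omega
    · have e1 : gL S = mL S := by simp [gL, hl]
      have h2 : mL (S.erase v) ≤ gL (S.erase v) := by unfold gL; split_ifs <;> omega
      omega

section FragStats

variable {S : Finset (ℕ × Bool)} {i₀ : ℕ}

/-- In the two-fragment case the potential `gL` does not decrease when passing
to a fragment. -/
lemma gL_frag (hb : ∀ b, (i₀, b) ∈ S) (hmin : ∀ t ∈ S, i₀ ≤ t.1) (b : Bool) :
    gL S ≤ gL (S.filter (fun v => v = (i₀, b) ∨ i₀ < v.1)) := by
  set R := S.filter (fun v => v = (i₀, b) ∨ i₀ < v.1) with hRdef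
  have hi₀full : i₀ ∈ fullL S := mem_fullL.mpr ⟨hb false, hb true⟩
  have hnl : ¬ lonelyLow S := by
    rintro ⟨w, hw, -, hwlow⟩
    exact absurd (hmin w hw) (by have := hwlow i₀ hi₀full; omega)
  have hnotR : (i₀, !b) ∉ R := by
    rw [hRdef, Finset.mem_filter]
    rintro ⟨-, h | h⟩
    · cases b <;> simp_all
    · omega
  have hfR : fullL R = (fullL S).erase i₀ := by
    ext i
    rw [mem_fullL, Finset.mem_erase, mem_fullL]
    constructor
    · rintro ⟨h1, h2⟩
      have hne : i ≠ i₀ := by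
        rintro rfl
        cases b
        · exact hnotR h2
        · exact hnotR h1
      have := Finset.mem_filter.mp h1
      have := Finset.mem_filter.mp h2
      exact ⟨hne, by tauto⟩
    · rintro ⟨hne, h1, h2⟩
      have hgt : i₀ < i := lt_of_le_of_ne (hmin _ h1) (Ne.symm hne)
      exact ⟨Finset.mem_filter.mpr ⟨h1, Or.inr hgt⟩, Finset.mem_filter.mpr ⟨h2, Or.inr hgt⟩⟩
  have hmR : mL R + 1 = mL S := by
    unfold mL
    rw [hfR, Finset.card_erase_of_mem hi₀full]
    have : 1 ≤ (fullL S).card := Finset.card_pos.mpr ⟨i₀, hi₀full⟩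
    omega
  have hlonR : lonelyLow R := by
    refine ⟨(i₀, b), Finset.mem_filter.mpr ⟨hb b, Or.inl rfl⟩, hnotR, ?_⟩
    intro i hi
    rw [hfR, Finset.mem_erase] at hi
    have := hmin (i, false) (mem_fullL.mp hi.2).1
    have hne := hi.1
    simp only at this ⊢
    omega
  unfold gL
  rw [if_neg hnl, if_pos hlonR]
  omega

/-- In the one-fragment case with a lonely minimum vertex, erasing it drops `hL` by one. -/
lemma hL_erase_lone (hs₀ : (s₀ : ℕ × Bool) ∈ S) (hmin : ∀ t ∈ S, s₀.1 ≤ t.1)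
    (hlone : (s₀.1, !s₀.2) ∉ S) :
    hL (S.erase s₀) + 1 = hL S := by
  have himg : (S.erase s₀).image Prod.fst = (S.image Prod.fst).erase s₀.1 := by
    ext i
    constructor
    · intro h
      obtain ⟨v, hv, rfl⟩ := Finset.mem_image.mp h
      have hv1 : v ≠ s₀ := (Finset.mem_erase.mp hv).1
      have hv2 : v ∈ S := (Finset.mem_erase.mp hv).2
      refine Finset.mem_erase.mpr ⟨?_, Finset.mem_image.mpr ⟨v, hv2, rfl⟩⟩
      intro hcontra
      apply hlone
      have hveq : v = (s₀.1, !s₀.2) := by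
        obtain ⟨j, c⟩ := v; obtain ⟨j', c'⟩ := s₀
        simp only at hcontra ⊢
        cases c <;> cases c' <;> simp_all
      rw [← hveq]; exact hv2
    · intro h
      obtain ⟨hne, h2⟩ := Finset.mem_erase.mp h
      obtain ⟨v, hv, rfl⟩ := Finset.mem_image.mp h2
      exact Finset.mem_image.mpr ⟨v, Finset.mem_erase.mpr ⟨fun hc => hne (by rw [hc]), hv⟩, rfl⟩
  have hmem : s₀.1 ∈ S.image Prod.fst := Finset.mem_image.mpr ⟨s₀, hs₀, rfl⟩
  unfold hL
  rw [himg, Finset.card_erase_of_mem hmem]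
  have : 1 ≤ (S.image Prod.fst).card := Finset.card_pos.mpr ⟨_, hmem⟩
  omega

end FragStats

section Bounds

variable {n : ℕ}

lemma mL_small {S : Finset (ℕ × Bool)} (h : S.card ≤ 1) : mL S = 0 := by
  unfold mL
  rw [Finset.card_eq_zero]
  ext i
  simp only [mem_fullL, Finset.notMem_empty, iff_false]
  rintro ⟨h1, h2⟩
  have hsub : ({(i, false), (i, true)} : Finset (ℕ × Bool)) ⊆ S := by
    intro x hx
    simp only [Finset.mem_insert, Finset.mem_singleton] at hx
    rcases hx with rfl | rfl <;> assumption
  have h3 := Finset.card_le_card hsub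
  rw [Finset.card_insert_of_notMem (by simp), Finset.card_singleton] at h3
  omega

lemma ddp_lb : ∀ (fuel : ℕ) (S : Finset (ℕ × Bool)), S ⊆ (Dn n).verts → S.card ≤ fuel →
    gL S ≤ ddpAux fuel (GS n S) := by
  intro fuel
  induction fuel with
  | zero =>
    intro S hSv hc
    have hS0 : S = ∅ := Finset.card_eq_zero.mp (Nat.le_zero.mp hc)
    subst hS0
    have h1 : mL (∅ : Finset (ℕ × Bool)) = 0 := mL_small (by simp)
    have h2 : ¬ lonelyLow (∅ : Finset (ℕ × Bool)) := by rintro ⟨v, hv, -⟩; simp at hv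
    simp [ddpAux, gL, h1, h2]
  | succ fuel ih =>
    intro S hSv hc
    simp only [ddpAux]
    by_cases hcard : (GS n S).verts.card ≤ 1
    · rw [dif_pos hcard]
      rw [GS_verts hSv] at hcard
      have h1 := mL_small hcard
      unfold gL
      split_ifs <;> omega
    · rw [dif_neg hcard]
      rw [GS_verts hSv] at hcard
      have hne : S.Nonempty := by rw [← Finset.card_pos]; omega
      obtain ⟨s₀, hs₀, hmin⟩ := Finset.exists_min_image S Prod.fst hne
      by_cases hpart : (s₀.1, !s₀.2) ∈ S
      · -- two fragments
        have hb : ∀ b, (s₀.1, b) ∈ S := by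
          intro b
          obtain ⟨j, c⟩ := s₀
          simp only at hpart ⊢
          cases b <;> cases c <;> simp_all
        rw [GS_fragments_full hSv hb hmin]
        have h1f : (s₀.1, false) ∈ S.filter (fun v => v = (s₀.1, false) ∨ s₀.1 < v.1) :=
          Finset.mem_filter.mpr ⟨hb false, Or.inl rfl⟩
        have hRne : S.filter (fun v => v = (s₀.1, false) ∨ s₀.1 < v.1) ≠
            S.filter (fun v => v = (s₀.1, true) ∨ s₀.1 < v.1) := by
          intro h
          rw [h, Finset.mem_filter] at h1f
          rcases h1f.2 with h' | h'
          · simp at h'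
          · omega
        rw [if_neg (by
          rw [Finset.card_insert_of_notMem (by simpa using hRne), Finset.card_singleton]
          omega)]
        refine le_trans ?_ (Finset.le_sup (Finset.mem_insert_self _ _))
        set R := S.filter (fun v => v = (s₀.1, false) ∨ s₀.1 < v.1) with hRdef
        have hRsubS : R ⊆ S := Finset.filter_subset _ _
        rw [GS_induce hSv R hRsubS]
        have hRcard : R.card ≤ fuel := by
          have hss : R ⊂ S := by
            refine ⟨hRsubS, fun hcon => ?_⟩
            have h2 := hcon (hb true)
            rw [hRdef, Finset.mem_filter] at h2
            rcases h2.2 with h' | h'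
            · simp at h'
            · omega
          have := Finset.card_lt_card hss
          omega
        exact le_trans (gL_frag hb hmin false) (ih R (hRsubS.trans hSv) hRcard)
      · -- one fragment
        rw [GS_fragments_lone hSv hs₀ hmin hpart, if_pos (Finset.card_singleton S)]
        rcases Nat.eq_zero_or_pos (gL S) with h0 | hpos
        · omega
        · refine le_trans (by omega : gL S ≤ 1 + (gL S - 1))
            (Nat.add_le_add_left (Finset.le_inf' _ _ ?_) 1)
          intro w hw
          rw [GS_verts hSv] at hw
          rw [GS_delete hSv w]
          have hcw : (S.erase w).card ≤ fuel := by
            rw [Finset.card_erase_of_mem hw]; omega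
          have := ih (S.erase w) ((Finset.erase_subset _ _).trans hSv) hcw
          have := gL_erase S w
          omega

lemma ddp_ub : ∀ (fuel : ℕ) (S : Finset (ℕ × Bool)), S ⊆ (Dn n).verts → S.card ≤ fuel →
    ddpAux fuel (GS n S) ≤ max 1 (hL S) := by
  intro fuel
  induction fuel with
  | zero => intro S hSv hc; simp [ddpAux]
  | succ fuel ih =>
    intro S hSv hc
    simp only [ddpAux]
    by_cases hcard : (GS n S).verts.card ≤ 1
    · rw [dif_pos hcard]; exact le_max_left _ _
    · rw [dif_neg hcard]
      rw [GS_verts hSv] at hcard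
      have hne : S.Nonempty := by rw [← Finset.card_pos]; omega
      obtain ⟨s₀, hs₀, hmin⟩ := Finset.exists_min_image S Prod.fst hne
      by_cases hpart : (s₀.1, !s₀.2) ∈ S
      · -- two fragments
        have hb : ∀ b, (s₀.1, b) ∈ S := by
          intro b
          obtain ⟨j, c⟩ := s₀
          simp only at hpart ⊢
          cases b <;> cases c <;> simp_all
        rw [GS_fragments_full hSv hb hmin]
        have h1f : (s₀.1, false) ∈ S.filter (fun v => v = (s₀.1, false) ∨ s₀.1 < v.1) :=
          Finset.mem_filter.mpr ⟨hb false, Or.inl rfl⟩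
        have hRne : S.filter (fun v => v = (s₀.1, false) ∨ s₀.1 < v.1) ≠
            S.filter (fun v => v = (s₀.1, true) ∨ s₀.1 < v.1) := by
          intro h
          rw [h, Finset.mem_filter] at h1f
          rcases h1f.2 with h' | h'
          · simp at h'
          · omega
        rw [if_neg (by
          rw [Finset.card_insert_of_notMem (by simpa using hRne), Finset.card_singleton]
          omega)]
        apply Finset.sup_le
        intro R hR
        have hRb : ∃ b : Bool, R = S.filter (fun v => v = (s₀.1, b) ∨ s₀.1 < v.1) := by
          simp only [Finset.mem_insert, Finset.mem_singleton] at hR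
          rcases hR with rfl | rfl
          · exact ⟨false, rfl⟩
          · exact ⟨true, rfl⟩
        obtain ⟨b, rfl⟩ := hRb
        set R := S.filter (fun v => v = (s₀.1, b) ∨ s₀.1 < v.1) with hRdef
        have hRsubS : R ⊆ S := Finset.filter_subset _ _
        rw [GS_induce hSv R hRsubS]
        have hRcard : R.card ≤ fuel := by
          have hss : R ⊂ S := by
            refine ⟨hRsubS, fun hcon => ?_⟩
            have h2 := hcon (hb !b)
            rw [hRdef, Finset.mem_filter] at h2
            rcases h2.2 with h' | h'
            · cases b <;> simp_all
            · omega
          have := Finset.card_lt_card hss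
          omega
        refine le_trans (ih R (hRsubS.trans hSv) hRcard) ?_
        exact max_le_max le_rfl (hL_mono hRsubS)
      · -- one fragment
        rw [GS_fragments_lone hSv hs₀ hmin hpart, if_pos (Finset.card_singleton S)]
        have hs₀v : s₀ ∈ (GS n S).verts := by rw [GS_verts hSv]; exact hs₀
        refine le_trans (Nat.add_le_add_left
          (Finset.inf'_le (fun v => ddpAux fuel ((GS n S).deleteVert v)) hs₀v) 1) ?_
        rw [GS_delete hSv s₀]
        have hcw : (S.erase s₀).card ≤ fuel := by
          rw [Finset.card_erase_of_mem hs₀]; omega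
        have hih := ih (S.erase s₀) ((Finset.erase_subset _ _).trans hSv) hcw
        -- there is a second, strictly higher, level
        obtain ⟨x, hx, y, hy, hxy⟩ := Finset.one_lt_card.mp (show 1 < S.card by omega)
        have hsecond : ∃ t ∈ S, s₀.1 < t.1 := by
          have key : ∀ t ∈ S, t ≠ s₀ → s₀.1 < t.1 := by
            intro t ht htne
            rcases lt_or_eq_of_le (hmin t ht) with h | h
            · exact h
            · exfalso
              apply hpart
              have : t = (s₀.1, !s₀.2) := by
                obtain ⟨j, c⟩ := t; obtain ⟨j', c'⟩ := s₀
                simp only at h ⊢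
                cases c <;> cases c' <;> simp_all
              rw [← this]; exact ht
          rcases eq_or_ne x s₀ with rfl | hxne
          · exact ⟨y, hy, key y hy (fun h => hxy h.symm)⟩
          · exact ⟨x, hx, key x hx hxne⟩
        obtain ⟨t, ht, htlt⟩ := hsecond
        have hterase : t ∈ S.erase s₀ :=
          Finset.mem_erase.mpr ⟨fun h => by subst h; omega, ht⟩
        have hL1 : 1 ≤ hL (S.erase s₀) :=
          Finset.card_pos.mpr ⟨t.1, Finset.mem_image.mpr ⟨t, hterase, rfl⟩⟩
        have hLe := hL_erase_lone hs₀ hmin hpart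
        have h2 : max 1 (hL (S.erase s₀)) = hL (S.erase s₀) := max_eq_right hL1
        have h3 : hL S ≤ max 1 (hL S) := le_max_right _ _
        omega

end Bounds

section DdpVal

variable {n : ℕ}

lemma dn_image : ((Dn n).verts.image Prod.fst) = Finset.Icc 1 n := by
  ext i
  simp only [Finset.mem_image, Finset.mem_Icc]
  constructor
  · rintro ⟨v, hv, rfl⟩
    exact dn_verts_mem.mp hv
  · intro hi
    exact ⟨(i, false), dn_verts_mem.mpr hi, rfl⟩

lemma dn_fullL : fullL (Dn n).verts = Finset.Icc 1 n := by
  ext i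
  simp only [mem_fullL, Finset.mem_Icc, dn_verts_mem]
  constructor
  · rintro ⟨h1, -⟩; exact h1
  · intro h; exact ⟨h, h⟩

lemma dn_not_lonely : ¬ lonelyLow (Dn n).verts := by
  rintro ⟨v, hv, hp, -⟩
  have h := dn_verts_mem.mp hv
  exact hp (dn_verts_mem.mpr (⟨h.1, h.2⟩ : 1 ≤ (v.1, !v.2).1 ∧ (v.1, !v.2).1 ≤ n))

lemma dn_gL : gL (Dn n).verts = n := by
  unfold gL mL
  rw [dn_fullL, if_neg dn_not_lonely, Nat.card_Icc]
  omega

lemma dn_hL : hL (Dn n).verts = n := by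
  unfold hL
  rw [dn_image, Nat.card_Icc]
  omega

lemma GS_dn : GS n (Dn n).verts = Dn n := by
  apply ext'
  · rw [induce_verts]
    ext x
    simp only [Finset.mem_inter, and_self]
  · intro u v
    rw [induce_adj]
    exact ⟨fun h => h.1, fun h => ⟨h, ((Dn n).adj_mem u v h).1, ((Dn n).adj_mem u v h).2⟩⟩

lemma dn_card : (Dn n).verts.card = 2 * n := by
  show (Finset.Icc 1 n ×ˢ (Finset.univ : Finset Bool)).card = 2 * n
  rw [Finset.card_product, Nat.card_Icc, Finset.card_univ, Fintype.card_bool]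
  omega

lemma dn_ddp (hn : 1 ≤ n) : ddp (Dn n) = n := by
  unfold ddp
  rw [← GS_dn (n := n)]
  have hub := ddp_ub ((GS n (Dn n).verts).verts.card) (Dn n).verts
    (Finset.Subset.refl _) (le_of_eq (by rw [GS_verts (Finset.Subset.refl _)]))
  have hlb := ddp_lb ((GS n (Dn n).verts).verts.card) (Dn n).verts
    (Finset.Subset.refl _) (le_of_eq (by rw [GS_verts (Finset.Subset.refl _)]))
  rw [dn_gL] at hlb
  rw [dn_hL, max_eq_right hn] at hub
  omega

end DdpVal

section Tree

variable {n : ℕ}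

/-- Complete binary tree with levels `1, …, n`, in heap indexing: vertices
`2, …, 2^(n+1) - 1`, with children `2m` and `2m+1`. -/
def treeP (n : ℕ) : FinDigraph ℕ where
  verts := Finset.Ico 2 (2 ^ (n + 1))
  Adj u v := 2 ≤ u ∧ (v = 2 * u ∨ v = 2 * u + 1) ∧ v < 2 ^ (n + 1)
  adj_mem := by
    intro u v h
    simp only [Finset.mem_Ico]
    omega

/-- The vertex of `Dn n` represented by a tree vertex. -/
def orgP (m : ℕ) : ℕ × Bool := (Nat.log 2 m, decide (m % 2 = 1))

lemma treeP_mem {m : ℕ} : m ∈ (treeP n).verts ↔ 2 ≤ m ∧ m < 2 ^ (n + 1) :=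
  Finset.mem_Ico

lemma log_bounds {m : ℕ} (h : 2 ≤ m) (h2 : m < 2 ^ (n + 1)) :
    1 ≤ Nat.log 2 m ∧ Nat.log 2 m ≤ n := by
  constructor
  · exact (Nat.le_log_iff_pow_le one_lt_two (by omega)).mpr (by simpa using h)
  · by_contra hc
    push_neg at hc
    have h3 : 2 ^ (n + 1) ≤ 2 ^ Nat.log 2 m := Nat.pow_le_pow_right (by norm_num) (by omega)
    have h4 : 2 ^ Nat.log 2 m ≤ m := Nat.pow_log_le_self 2 (by omega)
    omega

lemma treeP_adj_lt {u v : ℕ} (h : (treeP n).Adj u v) : u < v := by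
  obtain ⟨h1, h2, h3⟩ := h
  omega

lemma treeP_dag : (treeP n).IsDag := by
  intro v hv
  have : ∀ a b, Relation.TransGen (treeP n).Adj a b → a < b := by
    intro a b h
    induction h with
    | single h => exact treeP_adj_lt h
    | tail _ h ih => exact lt_trans ih (treeP_adj_lt h)
  exact absurd (this v v hv) (lt_irrefl v)

lemma treeP_adj_log {u v : ℕ} (h : (treeP n).Adj u v) :
    Nat.log 2 v = Nat.log 2 u + 1 := by
  obtain ⟨h1, h2, h3⟩ := h
  have h4 : 2 ^ Nat.log 2 u ≤ u := Nat.pow_log_le_self 2 (by omega)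
  have h5 : u < 2 ^ (Nat.log 2 u + 1) := Nat.lt_pow_succ_log_self one_lt_two u
  apply Nat.log_eq_of_pow_le_of_lt_pow
  · rw [pow_succ]
    omega
  · rw [pow_succ, pow_succ]
    omega

lemma treeP_chain_aux : ∀ (l : List ℕ) (x : ℕ), (x :: l).Chain' (treeP n).Adj →
    (∀ y ∈ x :: l, y ∈ (treeP n).verts) → Nat.log 2 x + (x :: l).length ≤ n + 1 := by
  intro l
  induction l with
  | nil =>
    intro x _ hmem
    have hx := treeP_mem.mp (hmem x (by simp))
    have := (log_bounds hx.1 hx.2).2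
    simp only [List.length_cons, List.length_nil]
    omega
  | cons y t ih =>
    intro x hch hmem
    simp only [List.Chain'] at hch
    rw [List.isChain_cons_cons] at hch
    have hlog := treeP_adj_log hch.1
    have := ih y hch.2 (fun z hz => hmem z (by simp at hz ⊢; tauto))
    simp only [List.length_cons] at this ⊢
    omega

lemma treeP_chain_len {l : List ℕ} (hch : l.Chain' (treeP n).Adj)
    (hmem : ∀ x ∈ l, x ∈ (treeP n).verts) : l.length ≤ n := by
  cases l with
  | nil => simp
  | cons x t =>
    have h1 := treeP_chain_aux t x hch hmem
    have hx := treeP_mem.mp (hmem x (by simp))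
    have h2 := (log_bounds hx.1 hx.2).1
    simp only [List.length_cons] at h1 ⊢
    omega

lemma treeP_depth (hn : 1 ≤ n) : (treeP n).depth = n := by
  unfold depth
  have hbdd : ∀ k ∈ {k : ℕ | ∃ l : List ℕ, l.Chain' (treeP n).Adj ∧
      (∀ x ∈ l, x ∈ (treeP n).verts) ∧ l.length = k}, k ≤ n := by
    rintro k ⟨l, hch, hmem, rfl⟩
    exact treeP_chain_len hch hmem
  apply le_antisymm
  · exact csSup_le ⟨0, ⟨[], by simp [List.Chain']⟩⟩ hbdd
  · apply le_csSup ⟨n, hbdd⟩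
    refine ⟨(List.range n).map (fun i => 2 ^ (i + 1)), ?_, ?_, by simp⟩
    · simp only [List.Chain']
      rw [List.isChain_iff_getElem]
      intro i hi
      simp only [List.length_map, List.length_range] at hi
      simp only [List.get_eq_getElem, List.getElem_map, List.getElem_range]
      have h1 : (2 : ℕ) ≤ 2 ^ (i + 1) := by
        calc (2:ℕ) = 2 ^ 1 := rfl
          _ ≤ 2 ^ (i + 1) := Nat.pow_le_pow_right (by norm_num) (by omega)
      refine ⟨h1, Or.inl ?_, ?_⟩
      · rw [pow_succ]; ring
      · have : i + 1 + 1 ≤ n + 1 := by omega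
        calc 2 ^ (i + 1 + 1) ≤ 2 ^ n := Nat.pow_le_pow_right (by norm_num) (by omega)
          _ < 2 ^ (n + 1) := Nat.pow_lt_pow_right (by norm_num) (by omega)
    · intro x hx
      simp only [List.mem_map, List.mem_range] at hx
      obtain ⟨i, hi, rfl⟩ := hx
      rw [treeP_mem]
      constructor
      · calc (2:ℕ) = 2 ^ 1 := rfl
          _ ≤ 2 ^ (i + 1) := Nat.pow_le_pow_right (by norm_num) (by omega)
      · calc 2 ^ (i + 1) ≤ 2 ^ n := Nat.pow_le_pow_right (by norm_num) (by omega)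
          _ < 2 ^ (n + 1) := Nat.pow_lt_pow_right (by norm_num) (by omega)

end Tree

section Valid

variable {n : ℕ}

lemma treeP_desc_pow : ∀ d : ℕ, 1 ≤ d → ∀ m e : ℕ, 2 ≤ m → e ≤ 1 →
    2 ^ d * m + e < 2 ^ (n + 1) →
    Relation.ReflTransGen (treeP n).Adj m (2 ^ d * m + e) := by
  intro d hd
  induction d, hd using Nat.le_induction with
  | base =>
    intro m e hm he hbound
    apply Relation.ReflTransGen.single
    refine ⟨hm, ?_, by simpa using hbound⟩
    rw [pow_one]
    omega
  | succ d hd ih =>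
    intro m e hm he hbound
    have hA : (2:ℕ) ^ (d + 1) = 2 ^ d * 2 := pow_succ 2 d
    have hA1 : (1:ℕ) ≤ 2 ^ d := Nat.one_le_two_pow
    have hg : 2 ^ (d + 1) * m = 2 * (2 ^ d * m) := by rw [hA]; ring
    have hm' : m ≤ 2 ^ d * m := Nat.le_mul_of_pos_left m (by omega)
    have h0 : 2 ^ d * m + 0 < 2 ^ (n + 1) := by omega
    have h1 := ih m 0 hm (by omega) h0
    refine h1.tail ?_
    exact ⟨by omega, by omega, by omega⟩

lemma orgP_mem {m : ℕ} (hm : m ∈ (treeP n).verts) : orgP m ∈ (Dn n).verts := by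
  rw [treeP_mem] at hm
  exact dn_verts_mem.mpr (log_bounds hm.1 hm.2)

lemma orgP_surj {v : ℕ × Bool} (hv : v ∈ (Dn n).verts) :
    ∃ m ∈ (treeP n).verts, orgP m = v := by
  obtain ⟨i, b⟩ := v
  have hi := dn_verts_mem.mp hv
  simp only at hi
  have h2 : (2:ℕ) ≤ 2 ^ i := by
    calc (2:ℕ) = 2 ^ 1 := rfl
      _ ≤ 2 ^ i := Nat.pow_le_pow_right (by norm_num) hi.1
  have h3 : 2 ^ i + 1 < 2 ^ (n + 1) := by
    have : (2:ℕ) ^ i + 2 ^ i ≤ 2 ^ (n + 1) := by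
      rw [← two_mul, ← pow_succ']
      exact Nat.pow_le_pow_right (by norm_num) (by omega)
    omega
  have hdvd : 2 ∣ 2 ^ i := dvd_pow_self 2 (by omega)
  obtain ⟨k, hk⟩ := hdvd
  cases b
  · refine ⟨2 ^ i, treeP_mem.mpr ⟨h2, by omega⟩, ?_⟩
    unfold orgP
    have hlog : Nat.log 2 (2 ^ i) = i := Nat.log_pow one_lt_two i
    have hmod : 2 ^ i % 2 = 0 := by omega
    simp [hlog, hmod]
  · refine ⟨2 ^ i + 1, treeP_mem.mpr ⟨by omega, h3⟩, ?_⟩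
    unfold orgP
    have hlog : Nat.log 2 (2 ^ i + 1) = i := by
      apply Nat.log_eq_of_pow_le_of_lt_pow (by omega)
      rw [pow_succ]
      omega
    have hmod : (2 ^ i + 1) % 2 = 1 := by omega
    simp [hlog, hmod]

lemma treeP_cover : NeighborCover (Dn n) (treeP n) orgP := by
  intro m hm u hadj
  left
  rw [treeP_mem] at hm
  obtain ⟨j, c⟩ := u
  obtain ⟨ha1, ha2, ha3⟩ := hadj
  simp only [orgP] at ha1 ha2
  set k := Nat.log 2 m with hk
  set d := j - k with hd
  set e : ℕ := if c then 1 else 0 with he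
  have he1 : e ≤ 1 := by rw [he]; split <;> omega
  have hd1 : 1 ≤ d := by omega
  have hkd : k + d = j := by omega
  have hpow1 : 2 ^ k ≤ m := Nat.pow_log_le_self 2 (by omega)
  have hpow2 : m < 2 ^ (k + 1) := Nat.lt_pow_succ_log_self one_lt_two m
  have hdd : (2:ℕ) ≤ 2 ^ d := by
    calc (2:ℕ) = 2 ^ 1 := rfl
      _ ≤ 2 ^ d := Nat.pow_le_pow_right (by norm_num) hd1
  set u' := 2 ^ d * m + e with hu'
  have hup : u' < 2 ^ (j + 1) := by
    have hdist : 2 ^ d * (m + 1) = 2 ^ d * m + 2 ^ d := by ring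
    have h1 : u' < 2 ^ d * (m + 1) := by omega
    have h2 : 2 ^ d * (m + 1) ≤ 2 ^ d * 2 ^ (k + 1) := by
      apply Nat.mul_le_mul_left
      omega
    have h3 : (2:ℕ) ^ d * 2 ^ (k + 1) = 2 ^ (j + 1) := by
      rw [← pow_add]
      congr 1
      omega
    omega
  have hlow : 2 ^ j ≤ u' := by
    have : (2:ℕ) ^ d * 2 ^ k ≤ 2 ^ d * m := by
      apply Nat.mul_le_mul_left
      exact hpow1
    have h3 : (2:ℕ) ^ d * 2 ^ k = 2 ^ j := by
      rw [← pow_add]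
      congr 1
      omega
    omega
  have hbound : u' < 2 ^ (n + 1) :=
    lt_of_lt_of_le hup (Nat.pow_le_pow_right (by norm_num) (by omega))
  have hlog : Nat.log 2 u' = j := Nat.log_eq_of_pow_le_of_lt_pow hlow hup
  have hdvd : 2 ∣ 2 ^ d := dvd_pow_self 2 (by omega)
  obtain ⟨w, hw⟩ := hdvd
  have hjj : (2:ℕ) ≤ 2 ^ j := by
    calc (2:ℕ) = 2 ^ 1 := rfl
      _ ≤ 2 ^ j := Nat.pow_le_pow_right (by norm_num) (by omega)
  have hmod : u' % 2 = e := by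
    have huw : u' = 2 * (w * m) + e := by rw [hu', hw]; ring
    omega
  refine ⟨u', treeP_mem.mpr ⟨le_trans hjj hlow, hbound⟩, ?_, ?_⟩
  · unfold orgP
    rw [hlog, hmod]
    cases c <;> simp [he]
  · exact treeP_desc_pow d hd1 m e hm.1 he1 hbound

lemma treeP_valid : IsValidDecomp (Dn n) (treeP n) orgP :=
  ⟨treeP_dag, fun _ hv => orgP_mem hv, fun _ hv => orgP_surj hv, treeP_cover⟩

lemma treeP_card : (treeP n).verts.card = 2 ^ (n + 1) - 2 := by
  show (Finset.Ico 2 (2 ^ (n + 1))).card = 2 ^ (n + 1) - 2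
  rw [Nat.card_Ico]

end Valid
end FinDigraph

open FinDigraph in
/-- For every `n ≥ 1`, the digraph `Dn n` (which has `2 n` vertices and DAG-depth `n`)
admits a valid DAG-depth decomposition of depth `n` — hence an optimal one — with
exactly `2 ^ (n + 1) - 2` vertices; thus optimal valid decompositions can be
exponentially large. -/
theorem Dn_has_exponential_optimal_decomp (n : ℕ) (hn : 1 ≤ n) :
    (Dn n).verts.card = 2 * n ∧ ddp (Dn n) = n ∧
    ∃ (P : FinDigraph ℕ) (org : ℕ → ℕ × Bool),
      IsValidDecomp (Dn n) P org ∧ depth P = n ∧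
      P.verts.card = 2 ^ (n + 1) - 2 := by
  exact ⟨dn_card, dn_ddp hn, treeP n, orgP, treeP_valid, treeP_depth hn, treeP_card⟩
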